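/- Every tree with maximum degree at most 3 admits a red-blue vertex coloring such that every blue component is an isolated vertex or an edge, and every red component is a star with 1, 2, or 3 edges. -/

import Mathlib

namespace CrumbyProof

set_option linter.unusedSectionVars false

variable {n : ℕ} [NeZero n]

/-- adjacency induced by a parent function -/
def A (f : Fin n → Fin n) (u v : Fin n) : Prop :=
  (u ≠ 0 ∧ f u = v) ∨ (v ≠ 0 ∧ f v = u)

def Child (f : Fin n → Fin n) (c i : Fin n) : Prop := c ≠ 0 ∧ f c = i

/-- `Desc f i j` : `i` is a (weak) ancestor of `j`. -/
def Desc (f : Fin n → Fin n) (i j : Fin n) : Prop := ∃ k, f^[k] j = i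

section Basic
variable {f : Fin n → Fin n} (hf0 : f 0 = 0) (hlt : ∀ i : Fin n, i ≠ 0 → f i < i)

include hf0 hlt in
lemma f_le (i : Fin n) : f i ≤ i := by
  by_cases h : i = 0
  · subst h; simp [hf0]
  · exact (hlt i h).le

include hf0 hlt in
lemma iter_le (k : ℕ) (j : Fin n) : f^[k] j ≤ j := by
  induction k with
  | zero => simp
  | succ k ih =>
    rw [Function.iterate_succ_apply']
    exact le_trans (f_le hf0 hlt _) ih

lemma desc_refl (i : Fin n) : Desc f i i := ⟨0, rfl⟩

include hf0 hlt in
lemma desc_le {i j : Fin n} (h : Desc f i j) : i ≤ j := by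
  obtain ⟨k, rfl⟩ := h; exact iter_le hf0 hlt k j

lemma desc_trans {i j k : Fin n} (h1 : Desc f i j) (h2 : Desc f j k) : Desc f i k := by
  obtain ⟨a, ha⟩ := h1; obtain ⟨b, hb⟩ := h2
  exact ⟨a + b, by rw [Function.iterate_add_apply, hb, ha]⟩

include hlt in
lemma child_gt {c i : Fin n} (h : Child f c i) : i < c := h.2 ▸ hlt c h.1

lemma desc_child {c i : Fin n} (h : Child f c i) : Desc f i c := ⟨1, h.2⟩

include hf0 in
lemma desc_step {i j : Fin n} (h : Desc f i j) (hne : j ≠ i) :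
    ∃ c, Child f c i ∧ Desc f c j := by
  obtain ⟨k, hk⟩ := h
  induction k generalizing j with
  | zero => exact absurd hk hne
  | succ k ih =>
    rw [Function.iterate_succ_apply'] at hk
    by_cases hm : f^[k] j = 0
    · have hi0 : i = 0 := by rw [hm] at hk; rw [← hk, hf0]
      exact ih hne (by rw [hm, hi0])
    · exact ⟨f^[k] j, ⟨hm, hk⟩, ⟨k, rfl⟩⟩

include hf0 hlt in
lemma desc_parent {i j : Fin n} (h : Desc f i j) (hne : j ≠ i) : Desc f i (f j) := by
  obtain ⟨k, hk⟩ := h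
  cases k with
  | zero => exact absurd hk hne
  | succ k => exact ⟨k, by rwa [Function.iterate_succ_apply] at hk⟩

include hf0 hlt in
lemma desc_zero (j : Fin n) : Desc f 0 j := by
  obtain ⟨m, hm⟩ : ∃ m, j.val = m := ⟨_, rfl⟩
  induction m using Nat.strong_induction_on generalizing j with
  | _ m ih =>
    by_cases h : j = 0
    · subst h; exact desc_refl 0
    · obtain ⟨k, hk⟩ := ih (f j).val (hm ▸ hlt j h) (f j) rfl
      exact ⟨k + 1, by rw [Function.iterate_succ_apply, hk]⟩

lemma desc_total {a b x : Fin n} (ha : Desc f a x) (hb : Desc f b x) :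
    Desc f a b ∨ Desc f b a := by
  obtain ⟨k1, hk1⟩ := ha; obtain ⟨k2, hk2⟩ := hb
  rcases le_total k1 k2 with h | h
  · right
    refine ⟨k2 - k1, ?_⟩
    rw [← hk1, ← Function.iterate_add_apply, Nat.sub_add_cancel h, hk2]
  · left
    refine ⟨k1 - k2, ?_⟩
    rw [← hk2, ← Function.iterate_add_apply, Nat.sub_add_cancel h, hk1]

include hf0 hlt in
lemma child_disjoint {c c' i x : Fin n} (hc : Child f c i) (hc' : Child f c' i)
    (hne : c ≠ c') (hx : Desc f c x) (hx' : Desc f c' x) : False := by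
  have key : ∀ {a b : Fin n}, Child f a i → Child f b i → a ≠ b → Desc f a b → False := by
    intro a b ha hb hab ⟨k, hk⟩
    cases k with
    | zero => exact hab (hk.symm)
    | succ k =>
      rw [Function.iterate_succ_apply, hb.2] at hk
      have : a ≤ i := desc_le hf0 hlt ⟨k, hk⟩
      exact absurd (child_gt hlt ha) (not_lt.mpr this)
  rcases desc_total hx hx' with h | h
  · exact key hc hc' hne h
  · exact key hc' hc (Ne.symm hne) h

include hlt in
lemma adj_ne {u v : Fin n} (h : A f u v) : u ≠ v := by
  rcases h with ⟨h0, hf⟩ | ⟨h0, hf⟩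
  · exact fun he => absurd (hf ▸ hlt u h0) (he ▸ lt_irrefl u)
  · exact fun he => absurd (hf ▸ hlt v h0) (he ▸ lt_irrefl v)

lemma adj_symm {u v : Fin n} (h : A f u v) : A f v u := h.symm

include hf0 hlt in
/-- classification of edges inside the subtree of `i`. -/
lemma adj_cases {i v w : Fin n} (hv : Desc f i v) (hw : Desc f i w) (h : A f v w) :
    (v = i ∧ Child f w i) ∨ (w = i ∧ Child f v i) ∨
    (∃ c, Child f c i ∧ Desc f c v ∧ Desc f c w) := by
  rcases h with ⟨h0, hf⟩ | ⟨h0, hf⟩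
  · -- f v = w, v ≠ 0 : w is parent of v
    have hvi : v ≠ i := fun he => by
      have h1 : i ≤ w := desc_le hf0 hlt hw
      have h2 : w < i := by rw [← hf, he]; exact hlt _ (he ▸ h0)
      exact absurd h2 (not_lt.mpr h1)
    obtain ⟨c, hc, hcv⟩ := desc_step hf0 hv hvi
    by_cases hvc : v = c
    · right; left; exact ⟨by rw [← hf, hvc, hc.2], hvc ▸ hc⟩
    · right; right
      exact ⟨c, hc, hcv, hf ▸ desc_parent hf0 hlt hcv hvc⟩
  · -- f w = v, w ≠ 0 : v is parent of w
    have hwi : w ≠ i := fun he => by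
      have h1 : i ≤ v := desc_le hf0 hlt hv
      have h2 : v < i := by rw [← hf, he]; exact hlt _ (he ▸ h0)
      exact absurd h2 (not_lt.mpr h1)
    obtain ⟨c, hc, hcw⟩ := desc_step hf0 hw hwi
    by_cases hwc : w = c
    · left; exact ⟨by rw [← hf, hwc, hc.2], hwc ▸ hc⟩
    · right; right
      exact ⟨c, hc, hf ▸ desc_parent hf0 hlt hcw hwc, hcw⟩

end Basic

/-- almost-crumby on subtree of `i` (condition 2 exempting the root). -/
def AC (f : Fin n → Fin n) (i : Fin n) (red : Fin n → Bool) : Prop :=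
  (∀ v, Desc f i v → red v = false → ∀ w w', Desc f i w → Desc f i w' →
     A f v w → A f v w' → red w = false → red w' = false → w = w') ∧
  (∀ v, Desc f i v → v ≠ i → red v = true → ∃ w, Desc f i w ∧ A f v w ∧ red w = true) ∧
  (∀ a b c d, Desc f i a → Desc f i b → Desc f i c → Desc f i d →
     red a = true → red b = true → red c = true → red d = true →
     a ≠ b → a ≠ c → a ≠ d → b ≠ c → b ≠ d → c ≠ d →
     A f a b → A f b c → A f c d → False)

def StB (f : Fin n → Fin n) (i : Fin n) (red : Fin n → Bool) : Prop := red i = false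
def StB0 (f : Fin n → Fin n) (i : Fin n) (red : Fin n → Bool) : Prop :=
  red i = false ∧ ∀ c, Child f c i → red c = true
def StP (f : Fin n → Fin n) (i : Fin n) (red : Fin n → Bool) : Prop :=
  red i = true ∧ ∀ c, Child f c i → red c = false
def StR (f : Fin n → Fin n) (i : Fin n) (red : Fin n → Bool) : Prop :=
  red i = true ∧ ∃ c, Child f c i ∧ red c = true
def StC (f : Fin n → Fin n) (i : Fin n) (red : Fin n → Bool) : Prop :=
  red i = true ∧ (∃ c, Child f c i ∧ red c = true) ∧
  ∀ c, Child f c i → red c = true → ∀ j, Child f j c → red j = false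

lemma StC_StR {f : Fin n → Fin n} {i red} (h : StC f i red) : StR f i red := ⟨h.1, h.2.1⟩
lemma StB0_StB {f : Fin n → Fin n} {i red} (h : StB0 f i red) : StB f i red := h.1

open Classical in
noncomputable def glue (f : Fin n → Fin n) (i : Fin n) (F : Fin n → Fin n → Bool)
    (b : Bool) : Fin n → Bool :=
  fun j => if h : ∃ c, Child f c i ∧ Desc f c j then F h.choose j else b

section Glue
variable {f : Fin n → Fin n} (hf0 : f 0 = 0) (hlt : ∀ i : Fin n, i ≠ 0 → f i < i)
variable {i : Fin n} {F : Fin n → Fin n → Bool} {b : Bool}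

include hf0 hlt in
lemma glue_self : glue f i F b i = b := by
  rw [glue, dif_neg]
  rintro ⟨c, hc, hd⟩
  exact absurd (child_gt hlt hc) (not_lt.mpr (desc_le hf0 hlt hd))

include hf0 hlt in
lemma glue_child {c j : Fin n} (hc : Child f c i) (hd : Desc f c j) :
    glue f i F b j = F c j := by
  have hex : ∃ c, Child f c i ∧ Desc f c j := ⟨c, hc, hd⟩
  rw [glue, dif_pos hex]
  obtain ⟨hc', hd'⟩ := hex.choose_spec
  by_cases he : hex.choose = c
  · rw [he]
  · exact absurd hd' (fun h => child_disjoint hf0 hlt hc' hc he h hd)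

include hf0 hlt in
lemma child_of_i {w : Fin n} (hw : Desc f i w) (h : A f i w) : Child f w i := by
  rcases h with ⟨h0, hfi⟩ | hch
  · have h1 : i ≤ w := desc_le hf0 hlt hw
    exact absurd (hfi ▸ hlt i h0) (not_lt.mpr (hfi ▸ h1))
  · exact hch

lemma A_child {x y z : Fin n} (hfy : f y = x) (h : A f y z) (hz : z ≠ x) : Child f z y := by
  rcases h with ⟨h0, hfz⟩ | hch
  · exact absurd (hfz.symm.trans hfy) hz
  · exact hch

include hf0 hlt in
lemma same_child {v w c : Fin n} (hv : Desc f i v) (hw : Desc f i w) (hvi : v ≠ i)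
    (hwi : w ≠ i) (hA : A f v w) (hc : Child f c i) (hcv : Desc f c v) : Desc f c w := by
  rcases adj_cases hf0 hlt hv hw hA with ⟨h, _⟩ | ⟨h, _⟩ | ⟨c₂, hc₂, hc₂v, hc₂w⟩
  · exact absurd h hvi
  · exact absurd h hwi
  · by_cases he : c₂ = c
    · exact he ▸ hc₂w
    · exact absurd hc₂v (fun h => child_disjoint hf0 hlt hc₂ hc he h hcv)

include hf0 hlt in
lemma eq_child_of_parent_i {v c : Fin n} (hv : Desc f i v) (hA : A f v i)
    (hc : Child f c i) (hcv : Desc f c v) : v = c := by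
  rcases hA with ⟨h0, hfv⟩ | ⟨h0, hfi⟩
  · by_cases he : v = c
    · exact he
    · exact absurd (desc_refl v) (fun h => child_disjoint hf0 hlt ⟨h0, hfv⟩ hc he h hcv)
  · have h1 : i ≤ v := desc_le hf0 hlt hv
    exact absurd (hfi ▸ hlt i h0) (not_lt.mpr (hfi ▸ h1))

include hf0 hlt in
lemma AC_glue
    (hAC : ∀ c, Child f c i → AC f c (F c))
    (h1 : b = false → ∀ c c', Child f c i → Child f c' i → F c c = false → F c' c' = false →
      c = c')
    (h1' : b = false → ∀ c, Child f c i → F c c = false → ∀ j, Child f j c → F c j = true)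
    (h2 : ∀ c, Child f c i → F c c = true → b = true ∨ ∃ j, Child f j c ∧ F c j = true)
    (h3a : b = true → ∀ c, Child f c i → F c c = true → ∀ j, Child f j c → F c j = true →
      ∀ k, Child f k j → F c k = false)
    (h3b : b = true → ∀ c c', Child f c i → Child f c' i → c ≠ c' → F c c = true →
      F c' c' = true → ∀ j, Child f j c → F c j = false) :
    AC f i (glue f i F b) := by
  have gv : ∀ (c j : Fin n), Child f c i → Desc f c j → glue f i F b j = F c j :=
    fun c j hc hd => glue_child hf0 hlt hc hd
  have gs : glue f i F b i = b := glue_self hf0 hlt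
  refine ⟨?_, ?_, ?_⟩
  · -- condition 1 : blue vertices have at most one blue neighbour
    intro v hv hvb w w' hw hw' hvw hvw' hwb hw'b
    by_cases hvi : v = i
    · subst hvi
      have hcw : Child f w v := child_of_i hf0 hlt hw hvw
      have hcw' : Child f w' v := child_of_i hf0 hlt hw' hvw'
      have hb : b = false := by rwa [gs] at hvb
      exact h1 hb w w' hcw hcw' (by rwa [gv w w hcw (desc_refl w)] at hwb)
        (by rwa [gv w' w' hcw' (desc_refl w')] at hw'b)
    · obtain ⟨c, hc, hcv⟩ := desc_step hf0 hv hvi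
      have loc : ∀ w₀, Desc f i w₀ → A f v w₀ → w₀ = i ∨ Desc f c w₀ := by
        intro w₀ hw₀ hA
        rcases adj_cases hf0 hlt hv hw₀ hA with ⟨h, _⟩ | ⟨h, _⟩ | ⟨c₂, hc₂, hc₂v, hc₂w⟩
        · exact absurd h hvi
        · exact Or.inl h
        · right
          by_cases he : c₂ = c
          · exact he ▸ hc₂w
          · exact absurd hc₂v (fun h => child_disjoint hf0 hlt hc₂ hc he h hcv)
      rcases loc w hw hvw with hwi | hcw <;> rcases loc w' hw' hvw' with hw'i | hcw'
      · rw [hwi, hw'i]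
      · -- w = i (blue, so b = false), w' below c
        subst hwi
        have hb : b = false := by rwa [gs] at hwb
        have hvc : v = c := eq_child_of_parent_i hf0 hlt hv hvw hc hcv
        subst hvc
        have hchw' : Child f w' v := by
          rcases adj_cases hf0 hlt (desc_refl v) hcw' hvw' with ⟨_, h⟩ | ⟨h, _⟩ | ⟨c₂, hc₂, hd, _⟩
          · exact h
          · exact absurd h.symm (adj_ne hlt hvw')
          · exact absurd (child_gt hlt hc₂) (not_lt.mpr (desc_le hf0 hlt hd))
        have hred := h1' hb v hc (by rwa [gv v v hc (desc_refl v)] at hvb) w' hchw'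
        rw [gv v w' hc hcw'] at hw'b
        rw [hw'b] at hred; exact absurd hred (by simp)
      · -- symmetric : w' = i, w below c
        subst hw'i
        have hb : b = false := by rwa [gs] at hw'b
        have hvc : v = c := eq_child_of_parent_i hf0 hlt hv hvw' hc hcv
        subst hvc
        have hchw : Child f w v := by
          rcases adj_cases hf0 hlt (desc_refl v) hcw hvw with ⟨_, h⟩ | ⟨h, _⟩ | ⟨c₂, hc₂, hd, _⟩
          · exact h
          · exact absurd h.symm (adj_ne hlt hvw)
          · exact absurd (child_gt hlt hc₂) (not_lt.mpr (desc_le hf0 hlt hd))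
        have hred := h1' hb v hc (by rwa [gv v v hc (desc_refl v)] at hvb) w hchw
        rw [gv v w hc hcw] at hwb
        rw [hwb] at hred; exact absurd hred (by simp)
      · -- both below c
        exact (hAC c hc).1 v hcv (by rwa [gv c v hc hcv] at hvb) w w' hcw hcw' hvw hvw'
          (by rwa [gv c w hc hcw] at hwb) (by rwa [gv c w' hc hcw'] at hw'b)
  · -- condition 2 : non-root red vertices have a red neighbour
    intro v hv hvi hvr
    obtain ⟨c, hc, hcv⟩ := desc_step hf0 hv hvi
    by_cases hvc : v = c
    · subst hvc
      rcases h2 v hc (by rwa [gv v v hc (desc_refl v)] at hvr) with hb | ⟨j, hj, hjr⟩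
      · exact ⟨i, desc_refl i, Or.inl ⟨hc.1, hc.2⟩, by rwa [gs]⟩
      · exact ⟨j, desc_trans (desc_child hc) (desc_child hj), Or.inr ⟨hj.1, hj.2⟩,
          by rwa [gv v j hc (desc_child hj)]⟩
    · obtain ⟨w, hw, hA, hr⟩ := (hAC c hc).2.1 v hcv hvc (by rwa [gv c v hc hcv] at hvr)
      exact ⟨w, desc_trans (desc_child hc) hw, hA, by rwa [gv c w hc hw]⟩
  · -- condition 3 : no red path with three edges
    intro p q r s hp hq hr hs hrp hrq hrr hrs hpq hpr hps hqr hqs hrs' hApq hAqr hArs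
    by_cases hpi : p = i
    · subst hpi
      have hb : b = true := by rwa [gs] at hrp
      have hcq : Child f q p := child_of_i hf0 hlt hq hApq
      have hcr : Child f r q := A_child hcq.2 hAqr (Ne.symm hpr)
      have hcs : Child f s r := A_child hcr.2 hArs (Ne.symm hqs)
      have h := h3a hb q hcq (by rwa [gv q q hcq (desc_refl q)] at hrq) r hcr
        (by rwa [gv q r hcq (desc_child hcr)] at hrr) s hcs
      rw [gv q s hcq (desc_trans (desc_child hcr) (desc_child hcs))] at hrs
      rw [hrs] at h; exact absurd h (by simp)
    by_cases hqi : q = i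
    · subst hqi
      have hb : b = true := by rwa [gs] at hrq
      have hcp : Child f p q := child_of_i hf0 hlt hp (adj_symm hApq)
      have hcr : Child f r q := child_of_i hf0 hlt hr hAqr
      have hcs : Child f s r := A_child hcr.2 hArs (Ne.symm hqs)
      have h := h3b hb r p hcr hcp (Ne.symm hpr) (by rwa [gv r r hcr (desc_refl r)] at hrr)
        (by rwa [gv p p hcp (desc_refl p)] at hrp) s hcs
      rw [gv r s hcr (desc_child hcs)] at hrs
      rw [hrs] at h; exact absurd h (by simp)
    by_cases hri : r = i
    · subst hri
      have hb : b = true := by rwa [gs] at hrr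
      have hcq : Child f q r := child_of_i hf0 hlt hq (adj_symm hAqr)
      have hcs : Child f s r := child_of_i hf0 hlt hs hArs
      have hcp : Child f p q := A_child hcq.2 (adj_symm hApq) hpr
      have h := h3b hb q s hcq hcs hqs (by rwa [gv q q hcq (desc_refl q)] at hrq)
        (by rwa [gv s s hcs (desc_refl s)] at hrs) p hcp
      rw [gv q p hcq (desc_child hcp)] at hrp
      rw [hrp] at h; exact absurd h (by simp)
    by_cases hsi : s = i
    · subst hsi
      have hb : b = true := by rwa [gs] at hrs
      have hcr : Child f r s := child_of_i hf0 hlt hr (adj_symm hArs)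
      have hcq : Child f q r := A_child hcr.2 (adj_symm hAqr) hqs
      have hcp : Child f p q := A_child hcq.2 (adj_symm hApq) hpr
      have h := h3a hb r hcr (by rwa [gv r r hcr (desc_refl r)] at hrr) q hcq
        (by rwa [gv r q hcr (desc_child hcq)] at hrq) p hcp
      rw [gv r p hcr (desc_trans (desc_child hcq) (desc_child hcp))] at hrp
      rw [hrp] at h; exact absurd h (by simp)
    · -- generic case : all four vertices lie below a common child
      obtain ⟨c, hc, hcp⟩ := desc_step hf0 hp hpi
      have hcq' : Desc f c q := same_child hf0 hlt hp hq hpi hqi hApq hc hcp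
      have hcr' : Desc f c r := same_child hf0 hlt hq hr hqi hri hAqr hc hcq'
      have hcs' : Desc f c s := same_child hf0 hlt hr hs hri hsi hArs hc hcr'
      exact (hAC c hc).2.2 p q r s hcp hcq' hcr' hcs'
        (by rwa [gv c p hc hcp] at hrp) (by rwa [gv c q hc hcq'] at hrq)
        (by rwa [gv c r hc hcr'] at hrr) (by rwa [gv c s hc hcs'] at hrs)
        hpq hpr hps hqr hqs hrs' hApq hAqr hArs

include hf0 hlt in
lemma rule_b0 (h : ∀ c, Child f c i → AC f c (F c) ∧ StR f c (F c)) :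
    AC f i (glue f i F false) ∧ StB0 f i (glue f i F false) := by
  constructor
  · apply AC_glue hf0 hlt (fun c hc => (h c hc).1)
    · intro _ c c' hc hc' hFc _
      have : F c c = true := (h c hc).2.1
      rw [this] at hFc; simp at hFc
    · intro _ c hc hFc
      have : F c c = true := (h c hc).2.1
      rw [this] at hFc; simp at hFc
    · intro c hc _; exact Or.inr (h c hc).2.2
    · intro hb; simp at hb
    · intro hb; simp at hb
  · refine ⟨glue_self hf0 hlt, fun c hc => ?_⟩
    rw [glue_child hf0 hlt hc (desc_refl c)]; exact (h c hc).2.1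

include hf0 hlt in
lemma rule_p (h : ∀ c, Child f c i → AC f c (F c) ∧ StB f c (F c)) :
    AC f i (glue f i F true) ∧ StP f i (glue f i F true) := by
  have hB : ∀ c, Child f c i → F c c = false := fun c hc => (h c hc).2
  constructor
  · apply AC_glue hf0 hlt (fun c hc => (h c hc).1)
    · intro hb; simp at hb
    · intro hb; simp at hb
    · intro c hc hFc; rw [hB c hc] at hFc; simp at hFc
    · intro _ c hc hFc; rw [hB c hc] at hFc; simp at hFc
    · intro _ c c' hc _ _ hFc; rw [hB c hc] at hFc; simp at hFc
  · refine ⟨glue_self hf0 hlt, fun c hc => ?_⟩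
    rw [glue_child hf0 hlt hc (desc_refl c)]; exact hB c hc

include hf0 hlt in
lemma rule_c (h : ∀ c, Child f c i → AC f c (F c) ∧ (StP f c (F c) ∨ StB f c (F c)))
    (hex : ∃ c, Child f c i ∧ StP f c (F c)) :
    AC f i (glue f i F true) ∧ StC f i (glue f i F true) := by
  have hP : ∀ c, Child f c i → F c c = true → StP f c (F c) := by
    intro c hc hFc
    rcases (h c hc).2 with hp | hb
    · exact hp
    · have : F c c = false := hb
      rw [this] at hFc; simp at hFc
  constructor
  · apply AC_glue hf0 hlt (fun c hc => (h c hc).1)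
    · intro hb; simp at hb
    · intro hb; simp at hb
    · intro c hc _; exact Or.inl rfl
    · intro _ c hc hFc j hj hFj
      rw [(hP c hc hFc).2 j hj] at hFj; simp at hFj
    · intro _ c c' hc _ _ hFc _ j hj; exact (hP c hc hFc).2 j hj
  · obtain ⟨c0, hc0, hp0⟩ := hex
    refine ⟨glue_self hf0 hlt, ⟨c0, hc0, ?_⟩, ?_⟩
    · rw [glue_child hf0 hlt hc0 (desc_refl c0)]; exact hp0.1
    · intro c hc hcr j hj
      rw [glue_child hf0 hlt hc (desc_refl c)] at hcr
      rw [glue_child hf0 hlt hc (desc_child hj)]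
      exact (hP c hc hcr).2 j hj

include hf0 hlt in
lemma rule_l (d : Fin n) (hd : Child f d i) (hCd : AC f d (F d) ∧ StC f d (F d))
    (h : ∀ c, Child f c i → c ≠ d → AC f c (F c) ∧ StB f c (F c)) :
    AC f i (glue f i F true) ∧ StR f i (glue f i F true) := by
  have hAC' : ∀ c, Child f c i → AC f c (F c) := fun c hc => by
    by_cases he : c = d
    · exact he ▸ hCd.1
    · exact (h c hc he).1
  have honly : ∀ c, Child f c i → F c c = true → c = d := by
    intro c hc hFc
    by_contra he
    have : F c c = false := (h c hc he).2
    rw [this] at hFc; simp at hFc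
  constructor
  · apply AC_glue hf0 hlt hAC'
    · intro hb; simp at hb
    · intro hb; simp at hb
    · intro c hc _; exact Or.inl rfl
    · intro _ c hc hFc j hj hFj k hk
      have hcd := honly c hc hFc; subst hcd
      exact hCd.2.2.2 j hj hFj k hk
    · intro _ c c' hc hc' hne hFc hFc' j hj
      exact absurd ((honly c hc hFc).trans (honly c' hc' hFc').symm) hne
  · refine ⟨glue_self hf0 hlt, d, hd, ?_⟩
    rw [glue_child hf0 hlt hd (desc_refl d)]; exact hCd.2.1

include hf0 hlt in
lemma rule_b1 (d : Fin n) (hd : Child f d i) (hBd : AC f d (F d) ∧ StB0 f d (F d))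
    (h : ∀ c, Child f c i → c ≠ d → AC f c (F c) ∧ StR f c (F c)) :
    AC f i (glue f i F false) ∧ StB f i (glue f i F false) := by
  have hAC' : ∀ c, Child f c i → AC f c (F c) := fun c hc => by
    by_cases he : c = d
    · exact he ▸ hBd.1
    · exact (h c hc he).1
  have hblue : ∀ c, Child f c i → F c c = false → c = d := by
    intro c hc hFc
    by_contra he
    have : F c c = true := (h c hc he).2.1
    rw [this] at hFc; simp at hFc
  constructor
  · apply AC_glue hf0 hlt hAC'
    · intro _ c c' hc hc' hFc hFc'
      rw [hblue c hc hFc, hblue c' hc' hFc']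
    · intro _ c hc hFc j hj
      have he := hblue c hc hFc; subst he
      exact hBd.2.2 j hj
    · intro c hc hFc
      have hne : c ≠ d := by
        intro he; subst he
        rw [hBd.2.1] at hFc; simp at hFc
      exact Or.inr (h c hc hne).2.2
    · intro hb; simp at hb
    · intro hb; simp at hb
  · exact glue_self hf0 hlt

end Glue

def EB (f : Fin n → Fin n) (i : Fin n) : Prop := ∃ red, AC f i red ∧ StB f i red
def EB0 (f : Fin n → Fin n) (i : Fin n) : Prop := ∃ red, AC f i red ∧ StB0 f i red
def EP (f : Fin n → Fin n) (i : Fin n) : Prop := ∃ red, AC f i red ∧ StP f i red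
def ER (f : Fin n → Fin n) (i : Fin n) : Prop := ∃ red, AC f i red ∧ StR f i red
def EC (f : Fin n → Fin n) (i : Fin n) : Prop := ∃ red, AC f i red ∧ StC f i red

lemma EC_ER {f : Fin n → Fin n} {i : Fin n} (h : EC f i) : ER f i :=
  h.imp (fun _ hr => ⟨hr.1, StC_StR hr.2⟩)
lemma EB0_EB {f : Fin n → Fin n} {i : Fin n} (h : EB0 f i) : EB f i :=
  h.imp (fun _ hr => ⟨hr.1, StB0_StB hr.2⟩)

/-- the four inductive "types" -/
def Phi (f : Fin n → Fin n) (i : Fin n) : Prop :=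
  (EC f i ∧ EP f i) ∨ (EB0 f i ∧ EP f i) ∨ (EB0 f i ∧ ER f i) ∨ (EB f i ∧ ER f i)

section Arity
variable {f : Fin n → Fin n} (hf0 : f 0 = 0) (hlt : ∀ i : Fin n, i ≠ 0 → f i < i)
variable {i : Fin n}

section Zero
variable (hch : ∀ c : Fin n, ¬ Child f c i)

include hf0 hlt hch in
lemma zero_ty : EB0 f i ∧ EP f i :=
  ⟨⟨_, rule_b0 hf0 hlt (F := fun _ _ => true) (fun c hc => absurd hc (hch c))⟩,
   ⟨_, rule_p hf0 hlt (F := fun _ _ => true) (fun c hc => absurd hc (hch c))⟩⟩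

end Zero

section One
variable {a : Fin n} (hch : ∀ c : Fin n, Child f c i ↔ c = a)

include hf0 hlt hch in
lemma one_b0 (ha : ER f a) : EB0 f i := by
  obtain ⟨ra, h1, h2⟩ := ha
  refine ⟨_, rule_b0 hf0 hlt (F := fun _ => ra) ?_⟩
  intro c hc; rw [(hch c).mp hc]; exact ⟨h1, h2⟩

include hf0 hlt hch in
lemma one_p (ha : EB f a) : EP f i := by
  obtain ⟨ra, h1, h2⟩ := ha
  refine ⟨_, rule_p hf0 hlt (F := fun _ => ra) ?_⟩
  intro c hc; rw [(hch c).mp hc]; exact ⟨h1, h2⟩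

include hf0 hlt hch in
lemma one_c (ha : EP f a) : EC f i := by
  obtain ⟨ra, h1, h2⟩ := ha
  refine ⟨_, rule_c hf0 hlt (F := fun _ => ra) ?_ ⟨a, (hch a).mpr rfl, h2⟩⟩
  intro c hc; rw [(hch c).mp hc]; exact ⟨h1, Or.inl h2⟩

include hf0 hlt hch in
lemma one_l (ha : EC f a) : ER f i := by
  obtain ⟨ra, h1, h2⟩ := ha
  exact ⟨_, rule_l hf0 hlt (F := fun _ => ra) a ((hch a).mpr rfl) ⟨h1, h2⟩
    (fun c hc hne => absurd ((hch c).mp hc) hne)⟩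

end One

section Two
variable {a a' : Fin n} (hab : a ≠ a')
  (hch : ∀ c : Fin n, Child f c i ↔ (c = a ∨ c = a'))

include hf0 hlt hab hch in
lemma two_b0 (ha : ER f a) (hb : ER f a') : EB0 f i := by
  obtain ⟨ra, h1, h2⟩ := ha; obtain ⟨rb, h1', h2'⟩ := hb
  refine ⟨_, rule_b0 hf0 hlt (F := Function.update (fun _ => rb) a ra) ?_⟩
  intro c hc
  rcases (hch c).mp hc with h | h <;> rw [h]
  · rw [Function.update_self]; exact ⟨h1, h2⟩
  · rw [Function.update_of_ne (Ne.symm hab)]; exact ⟨h1', h2'⟩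

include hf0 hlt hab hch in
lemma two_p (ha : EB f a) (hb : EB f a') : EP f i := by
  obtain ⟨ra, h1, h2⟩ := ha; obtain ⟨rb, h1', h2'⟩ := hb
  refine ⟨_, rule_p hf0 hlt (F := Function.update (fun _ => rb) a ra) ?_⟩
  intro c hc
  rcases (hch c).mp hc with h | h <;> rw [h]
  · rw [Function.update_self]; exact ⟨h1, h2⟩
  · rw [Function.update_of_ne (Ne.symm hab)]; exact ⟨h1', h2'⟩

include hf0 hlt hab hch in
lemma two_c (ha : EP f a) (hb : EB f a') : EC f i := by
  obtain ⟨ra, h1, h2⟩ := ha; obtain ⟨rb, h1', h2'⟩ := hb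
  refine ⟨_, rule_c hf0 hlt (F := Function.update (fun _ => rb) a ra) ?_
    ⟨a, (hch a).mpr (Or.inl rfl), by rw [Function.update_self]; exact h2⟩⟩
  intro c hc
  rcases (hch c).mp hc with h | h <;> rw [h]
  · rw [Function.update_self]; exact ⟨h1, Or.inl h2⟩
  · rw [Function.update_of_ne (Ne.symm hab)]; exact ⟨h1', Or.inr h2'⟩

include hf0 hlt hab hch in
lemma two_cc (ha : EP f a) (hb : EP f a') : EC f i := by
  obtain ⟨ra, h1, h2⟩ := ha; obtain ⟨rb, h1', h2'⟩ := hb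
  refine ⟨_, rule_c hf0 hlt (F := Function.update (fun _ => rb) a ra) ?_
    ⟨a, (hch a).mpr (Or.inl rfl), by rw [Function.update_self]; exact h2⟩⟩
  intro c hc
  rcases (hch c).mp hc with h | h <;> rw [h]
  · rw [Function.update_self]; exact ⟨h1, Or.inl h2⟩
  · rw [Function.update_of_ne (Ne.symm hab)]; exact ⟨h1', Or.inl h2'⟩

include hf0 hlt hab hch in
lemma two_l (ha : EC f a) (hb : EB f a') : ER f i := by
  obtain ⟨ra, h1, h2⟩ := ha; obtain ⟨rb, h1', h2'⟩ := hb
  refine ⟨_, rule_l hf0 hlt (F := Function.update (fun _ => rb) a ra) a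
    ((hch a).mpr (Or.inl rfl)) (by rw [Function.update_self]; exact ⟨h1, h2⟩) ?_⟩
  intro c hc hne
  rcases (hch c).mp hc with h | h
  · exact absurd h hne
  · rw [h, Function.update_of_ne (Ne.symm hab)]; exact ⟨h1', h2'⟩

include hf0 hlt hab hch in
lemma two_b1 (ha : EB0 f a) (hb : ER f a') : EB f i := by
  obtain ⟨ra, h1, h2⟩ := ha; obtain ⟨rb, h1', h2'⟩ := hb
  refine ⟨_, rule_b1 hf0 hlt (F := Function.update (fun _ => rb) a ra) a
    ((hch a).mpr (Or.inl rfl)) (by rw [Function.update_self]; exact ⟨h1, h2⟩) ?_⟩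
  intro c hc hne
  rcases (hch c).mp hc with h | h
  · exact absurd h hne
  · rw [h, Function.update_of_ne (Ne.symm hab)]; exact ⟨h1', h2'⟩

end Two
end Arity

section Steps
variable {f : Fin n → Fin n} (hf0 : f 0 = 0) (hlt : ∀ i : Fin n, i ≠ 0 → f i < i)
variable {i : Fin n}

include hf0 hlt in
lemma one_ty {a : Fin n} (hch : ∀ c : Fin n, Child f c i ↔ c = a) (hA : Phi f a) :
    Phi f i := by
  rcases hA with ⟨hCa, hPa⟩ | ⟨hB0a, hPa⟩ | ⟨hB0a, hRa⟩ | ⟨hBa, hRa⟩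
  · exact Or.inr (Or.inr (Or.inl ⟨one_b0 hf0 hlt hch (EC_ER hCa), one_l hf0 hlt hch hCa⟩))
  · exact Or.inl ⟨one_c hf0 hlt hch hPa, one_p hf0 hlt hch (EB0_EB hB0a)⟩
  · exact Or.inr (Or.inl ⟨one_b0 hf0 hlt hch hRa, one_p hf0 hlt hch (EB0_EB hB0a)⟩)
  · exact Or.inr (Or.inl ⟨one_b0 hf0 hlt hch hRa, one_p hf0 hlt hch hBa⟩)

include hf0 hlt in
lemma two_ty {a a' : Fin n} (hab : a ≠ a')
    (hch : ∀ c : Fin n, Child f c i ↔ (c = a ∨ c = a'))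
    (hA : Phi f a) (hB : Phi f a') : Phi f i := by
  have hch' : ∀ c : Fin n, Child f c i ↔ (c = a' ∨ c = a) :=
    fun c => (hch c).trans or_comm
  have hab' := Ne.symm hab
  rcases hA with ⟨hCa, hPa⟩ | ⟨hB0a, hPa⟩ | ⟨hB0a, hRa⟩ | ⟨hBa, hRa⟩ <;>
    rcases hB with ⟨hCb, hPb⟩ | ⟨hB0b, hPb⟩ | ⟨hB0b, hRb⟩ | ⟨hBb, hRb⟩
  -- (TA,·)
  · exact Or.inr (Or.inr (Or.inl ⟨two_b0 hf0 hlt hab hch (EC_ER hCa) (EC_ER hCb),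
      EC_ER (two_cc hf0 hlt hab hch hPa hPb)⟩))
  · exact Or.inr (Or.inr (Or.inr ⟨two_b1 hf0 hlt hab' hch' hB0b (EC_ER hCa),
      two_l hf0 hlt hab hch hCa (EB0_EB hB0b)⟩))
  · exact Or.inr (Or.inr (Or.inl ⟨two_b0 hf0 hlt hab hch (EC_ER hCa) hRb,
      two_l hf0 hlt hab hch hCa (EB0_EB hB0b)⟩))
  · exact Or.inr (Or.inr (Or.inl ⟨two_b0 hf0 hlt hab hch (EC_ER hCa) hRb,
      two_l hf0 hlt hab hch hCa hBb⟩))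
  -- (TB,·)
  · exact Or.inr (Or.inr (Or.inr ⟨two_b1 hf0 hlt hab hch hB0a (EC_ER hCb),
      two_l hf0 hlt hab' hch' hCb (EB0_EB hB0a)⟩))
  · exact Or.inl ⟨two_c hf0 hlt hab hch hPa (EB0_EB hB0b),
      two_p hf0 hlt hab hch (EB0_EB hB0a) (EB0_EB hB0b)⟩
  · exact Or.inl ⟨two_c hf0 hlt hab hch hPa (EB0_EB hB0b),
      two_p hf0 hlt hab hch (EB0_EB hB0a) (EB0_EB hB0b)⟩
  · exact Or.inl ⟨two_c hf0 hlt hab hch hPa hBb,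
      two_p hf0 hlt hab hch (EB0_EB hB0a) hBb⟩
  -- (TD,·)
  · exact Or.inr (Or.inr (Or.inl ⟨two_b0 hf0 hlt hab hch hRa (EC_ER hCb),
      two_l hf0 hlt hab' hch' hCb (EB0_EB hB0a)⟩))
  · exact Or.inl ⟨two_c hf0 hlt hab' hch' hPb (EB0_EB hB0a),
      two_p hf0 hlt hab hch (EB0_EB hB0a) (EB0_EB hB0b)⟩
  · exact Or.inr (Or.inl ⟨two_b0 hf0 hlt hab hch hRa hRb,
      two_p hf0 hlt hab hch (EB0_EB hB0a) (EB0_EB hB0b)⟩)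
  · exact Or.inr (Or.inl ⟨two_b0 hf0 hlt hab hch hRa hRb,
      two_p hf0 hlt hab hch (EB0_EB hB0a) hBb⟩)
  -- (TE,·)
  · exact Or.inr (Or.inr (Or.inl ⟨two_b0 hf0 hlt hab hch hRa (EC_ER hCb),
      two_l hf0 hlt hab' hch' hCb hBa⟩))
  · exact Or.inl ⟨two_c hf0 hlt hab' hch' hPb hBa,
      two_p hf0 hlt hab hch hBa (EB0_EB hB0b)⟩
  · exact Or.inr (Or.inl ⟨two_b0 hf0 hlt hab hch hRa hRb,
      two_p hf0 hlt hab hch hBa (EB0_EB hB0b)⟩)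
  · exact Or.inr (Or.inl ⟨two_b0 hf0 hlt hab hch hRa hRb,
      two_p hf0 hlt hab hch hBa hBb⟩)

end Steps

instance childDec {f : Fin n → Fin n} {c i : Fin n} : Decidable (Child f c i) :=
  decidable_of_iff (c ≠ 0 ∧ f c = i) Iff.rfl

section Main
variable {f : Fin n → Fin n} (hf0 : f 0 = 0) (hlt : ∀ i : Fin n, i ≠ 0 → f i < i)

include hf0 hlt in
lemma phi_step {i : Fin n}
    (hcard : (Finset.univ.filter (fun j => Child f j i)).card ≤ 2)
    (hind : ∀ c, Child f c i → Phi f c) : Phi f i := by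
  set s := Finset.univ.filter (fun j => Child f j i) with hs
  have hmem : ∀ c, Child f c i ↔ c ∈ s := by
    intro c; rw [hs]; simp [Finset.mem_filter]
  by_cases h0 : s.card = 0
  · have : s = ∅ := Finset.card_eq_zero.mp h0
    refine Or.inr (Or.inl (zero_ty hf0 hlt ?_))
    intro c hc
    rw [hmem c, this] at hc
    exact absurd hc (Finset.notMem_empty c)
  by_cases h1 : s.card = 1
  · obtain ⟨a, ha⟩ := Finset.card_eq_one.mp h1
    have hch : ∀ c, Child f c i ↔ c = a := by
      intro c; rw [hmem c, ha, Finset.mem_singleton]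
    exact one_ty hf0 hlt hch (hind a ((hch a).mpr rfl))
  · have h2 : s.card = 2 := by omega
    obtain ⟨a, a', hab, ha⟩ := Finset.card_eq_two.mp h2
    have hch : ∀ c, Child f c i ↔ (c = a ∨ c = a') := by
      intro c; rw [hmem c, ha, Finset.mem_insert, Finset.mem_singleton]
    exact two_ty hf0 hlt hab hch (hind a ((hch a).mpr (Or.inl rfl)))
      (hind a' ((hch a').mpr (Or.inr rfl)))

include hf0 hlt in
lemma phi_all
    (hdeg : ∀ i : Fin n, i ≠ 0 → (Finset.univ.filter (fun j => Child f j i)).card ≤ 2) :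
    ∀ i : Fin n, i ≠ 0 → Phi f i := by
  suffices h : ∀ m : ℕ, ∀ i : Fin n, n - i.val ≤ m → i ≠ 0 → Phi f i by
    intro i; exact h n i (by omega) 
  intro m
  induction m with
  | zero => intro i h; exact absurd h (by have := i.isLt; omega)
  | succ m ih =>
    intro i h hi0
    apply phi_step hf0 hlt (hdeg i hi0)
    intro c hc
    have hlt' : i < c := child_gt hlt hc
    exact ih c (by have := c.isLt; have : i.val < c.val := hlt'; omega) hc.1

open Classical in
include hf0 hlt in
lemma phase2_root
    (hdeg : ∀ i : Fin n, i ≠ 0 → (Finset.univ.filter (fun j => Child f j i)).card ≤ 2) :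
    ∃ red : Fin n → Bool, AC f 0 red ∧
      (red 0 = true → ∃ c, Child f c 0 ∧ red c = true) := by
  have hphi : ∀ c, Child f c 0 → Phi f c := fun c hc => phi_all hf0 hlt hdeg c hc.1
  by_cases hall : ∀ c, Child f c 0 → ER f c
  · have hkey : ∀ c, Child f c 0 →
        AC f c ((fun c => if h : ∃ red, AC f c red ∧ StR f c red then h.choose
          else (fun _ => true)) c) ∧
        StR f c ((fun c => if h : ∃ red, AC f c red ∧ StR f c red then h.choose
          else (fun _ => true)) c) := by
      intro c hc
      have h' : ∃ red, AC f c red ∧ StR f c red := hall c hc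
      show AC f c (if h : ∃ red, AC f c red ∧ StR f c red then h.choose
          else (fun _ => true)) ∧
        StR f c (if h : ∃ red, AC f c red ∧ StR f c red then h.choose
          else (fun _ => true))
      rw [dif_pos h']
      exact h'.choose_spec
    obtain ⟨hAC0, hSt⟩ := rule_b0 hf0 hlt (i := 0) hkey
    refine ⟨_, hAC0, fun hr => ?_⟩
    rw [hSt.1] at hr; simp at hr
  · push_neg at hall
    obtain ⟨c0, hc0, hnR⟩ := hall
    have hP0 : ∃ red, AC f c0 red ∧ StP f c0 red := by
      rcases hphi c0 hc0 with ⟨_, h⟩ | ⟨_, h⟩ | ⟨_, h⟩ | ⟨_, h⟩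
      · exact h
      · exact h
      · exact absurd h hnR
      · exact absurd h hnR
    have hPB : ∀ c, Child f c 0 → (EP f c ∨ EB f c) := by
      intro c hc
      rcases hphi c hc with ⟨_, h⟩ | ⟨_, h⟩ | ⟨h, _⟩ | ⟨h, _⟩
      · exact Or.inl h
      · exact Or.inl h
      · exact Or.inr (EB0_EB h)
      · exact Or.inr h
    have hkey : ∀ c, Child f c 0 →
        AC f c ((fun c => if h : ∃ red, AC f c red ∧ StP f c red then h.choose else
          (if h' : ∃ red, AC f c red ∧ StB f c red then h'.choose else (fun _ => true))) c) ∧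
        (StP f c ((fun c => if h : ∃ red, AC f c red ∧ StP f c red then h.choose else
          (if h' : ∃ red, AC f c red ∧ StB f c red then h'.choose else (fun _ => true))) c) ∨
         StB f c ((fun c => if h : ∃ red, AC f c red ∧ StP f c red then h.choose else
          (if h' : ∃ red, AC f c red ∧ StB f c red then h'.choose else (fun _ => true))) c)) := by
      intro c hc
      show AC f c (if h : ∃ red, AC f c red ∧ StP f c red then h.choose else
          (if h' : ∃ red, AC f c red ∧ StB f c red then h'.choose else (fun _ => true))) ∧
        (StP f c (if h : ∃ red, AC f c red ∧ StP f c red then h.choose else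
          (if h' : ∃ red, AC f c red ∧ StB f c red then h'.choose else (fun _ => true))) ∨
         StB f c (if h : ∃ red, AC f c red ∧ StP f c red then h.choose else
          (if h' : ∃ red, AC f c red ∧ StB f c red then h'.choose else (fun _ => true))))
      by_cases hp : ∃ red, AC f c red ∧ StP f c red
      · rw [dif_pos hp]
        exact ⟨hp.choose_spec.1, Or.inl hp.choose_spec.2⟩
      · have hb : ∃ red, AC f c red ∧ StB f c red := (hPB c hc).resolve_left hp
        rw [dif_neg hp, dif_pos hb]
        exact ⟨hb.choose_spec.1, Or.inr hb.choose_spec.2⟩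
    have hex : ∃ c, Child f c 0 ∧
        StP f c ((fun c => if h : ∃ red, AC f c red ∧ StP f c red then h.choose else
          (if h' : ∃ red, AC f c red ∧ StB f c red then h'.choose else (fun _ => true))) c) := by
      refine ⟨c0, hc0, ?_⟩
      show StP f c0 (if h : ∃ red, AC f c0 red ∧ StP f c0 red then h.choose else
          (if h' : ∃ red, AC f c0 red ∧ StB f c0 red then h'.choose else (fun _ => true)))
      rw [dif_pos hP0]
      exact hP0.choose_spec.2
    obtain ⟨hAC0, hSt⟩ := rule_c hf0 hlt (i := 0) hkey hex
    exact ⟨_, hAC0, fun _ => hSt.2.1⟩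

include hf0 hlt in
theorem phase2
    (hdeg : ∀ i : Fin n, i ≠ 0 → (Finset.univ.filter (fun j => Child f j i)).card ≤ 2) :
    ∃ red : Fin n → Bool,
      (∀ v, red v = false → ∀ w w', A f v w → A f v w' → red w = false → red w' = false →
        w = w') ∧
      (∀ v, red v = true → ∃ w, A f v w ∧ red w = true) ∧
      (∀ p q r s : Fin n, red p = true → red q = true → red r = true → red s = true →
        p ≠ q → p ≠ r → p ≠ s → q ≠ r → q ≠ s → r ≠ s →
        A f p q → A f q r → A f r s → False) := by
  obtain ⟨red, hAC, hroot⟩ := phase2_root hf0 hlt hdeg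
  have hz : ∀ v : Fin n, Desc f 0 v := desc_zero hf0 hlt
  refine ⟨red, ?_, ?_, ?_⟩
  · intro v hv w w' hA hA' hw hw'
    exact hAC.1 v (hz v) hv w w' (hz w) (hz w') hA hA' hw hw'
  · intro v hv
    by_cases hv0 : v = 0
    · subst hv0
      obtain ⟨c, hc, hcr⟩ := hroot hv
      exact ⟨c, Or.inr ⟨hc.1, hc.2⟩, hcr⟩
    · obtain ⟨w, _, hA, hr⟩ := hAC.2.1 v (hz v) hv0 hv
      exact ⟨w, hA, hr⟩
  · intro p q r s h1 h2 h3 h4 h5 h6 h7 h8 h9 h10 h11 h12 h13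
    exact hAC.2.2 p q r s (hz p) (hz q) (hz r) (hz s) h1 h2 h3 h4 h5 h6 h7 h8 h9 h10 h11 h12 h13

end Main

end CrumbyProof

open SimpleGraph in
theorem tree_struct {V : Type*} [Fintype V] (G : SimpleGraph V)
    (hconn : G.Connected) (hacyc : G.IsAcyclic) [NeZero (Fintype.card V)] :
    ∃ (e : Fin (Fintype.card V) ≃ V) (f : Fin (Fintype.card V) → Fin (Fintype.card V)),
      f 0 = 0 ∧ (∀ i, i ≠ 0 → f i < i) ∧
      (∀ i j, G.Adj (e i) (e j) ↔ CrumbyProof.A f i j) := by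
  classical
  haveI : Nonempty V := hconn.nonempty
  set n := Fintype.card V with hn
  obtain ⟨r⟩ := ‹Nonempty V›
  obtain ⟨pth⟩ : Nonempty (∀ v : V, G.Path v r) :=
    ⟨fun v => (hconn.preconnected v r).some.toPath⟩
  have huniq : ∀ (v : V) (p : G.Walk v r), p.IsPath → p = (pth v).1 := by
    intro v p hp
    exact congrArg Subtype.val (hacyc.path_unique ⟨p, hp⟩ (pth v))
  set rank : V → ℕ := fun v => (pth v).1.length with hrank
  have hrank_r : rank r = 0 := by
    have h := huniq r Walk.nil Walk.IsPath.nil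
    simp [hrank, ← h]
  have hrank_zero : ∀ v, rank v = 0 → v = r := fun v h =>
    Walk.eq_of_length_eq_zero h
  set parent : V → V := fun v => (pth v).1.getVert 1 with hpar
  have hdecomp : ∀ v : V, v ≠ r → ∃ (q : G.Walk (parent v) r) (h : G.Adj v (parent v)),
      (pth v).1 = Walk.cons h q := by
    intro v hv
    obtain ⟨u, hadj, q, hq⟩ := Walk.exists_eq_cons_of_ne hv (pth v).1
    have hu : parent v = u := by
      show (pth v).1.getVert 1 = u
      rw [hq, Walk.getVert_cons q hadj one_ne_zero]
      simp
    subst hu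
    exact ⟨q, hadj, hq⟩
  have hparent_adj : ∀ v, v ≠ r → G.Adj v (parent v) := by
    intro v hv
    obtain ⟨q, hadj, -⟩ := hdecomp v hv
    exact hadj
  have hparent_rank : ∀ v, v ≠ r → rank (parent v) + 1 = rank v := by
    intro v hv
    obtain ⟨q, hadj, hq⟩ := hdecomp v hv
    have hqp : q.IsPath := by
      have h2 := (pth v).2
      rw [hq] at h2
      exact h2.of_cons
    have h3 := huniq (parent v) q hqp
    show (pth (parent v)).1.length + 1 = (pth v).1.length
    rw [hq, ← h3]
    simp
  have hadj_char : ∀ u v, G.Adj u v → (u ≠ r ∧ parent u = v) ∨ (v ≠ r ∧ parent v = u) := by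
    intro u v hadj
    by_cases hmem : v ∈ (pth u).1.support
    · left
      have hp := (pth u).2
      have h1 : ((pth u).1.takeUntil v hmem).IsPath := hp.takeUntil hmem
      have hedge : (Walk.cons hadj Walk.nil : G.Walk u v).IsPath := by
        rw [Walk.cons_isPath_iff]
        exact ⟨Walk.IsPath.nil, by simp [hadj.ne]⟩
      have h4 := hacyc.path_unique ⟨(pth u).1.takeUntil v hmem, h1⟩ ⟨Walk.cons hadj Walk.nil, hedge⟩
      have heq : (pth u).1.takeUntil v hmem = Walk.cons hadj Walk.nil :=
        congrArg Subtype.val h4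
      have hspec := (pth u).1.take_spec hmem
      rw [heq] at hspec
      have hcons : (pth u).1 = Walk.cons hadj ((pth u).1.dropUntil v hmem) :=
        hspec.symm.trans (by simp)
      constructor
      · intro hur
        subst hur
        have h0 : (pth u).1.length = 0 := hrank_r
        rw [hcons] at h0
        simp at h0
      · show (pth u).1.getVert 1 = v
        rw [hcons, Walk.getVert_cons _ _ one_ne_zero]
        simp
    · right
      have hpath : (Walk.cons hadj.symm (pth u).1).IsPath := by
        rw [Walk.cons_isPath_iff]
        exact ⟨(pth u).2, hmem⟩
      have h5 := huniq v _ hpath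
      constructor
      · intro hvr
        subst hvr
        have h0 : (pth v).1.length = 0 := hrank_r
        rw [← h5] at h0
        simp at h0
      · show (pth v).1.getVert 1 = u
        rw [← h5, Walk.getVert_cons _ _ one_ne_zero]
        simp
  set idx : V ≃ Fin n := Fintype.equivFin V with hidx
  set weight : V → ℕ := fun v => rank v * n + (idx v).val with hweight
  have hwlt : ∀ u v, rank u < rank v → weight u < weight v := by
    intro u v h
    show rank u * n + (idx u).val < rank v * n + (idx v).val
    have h1 : (idx u).val < n := (idx u).isLt
    have h2 : rank u + 1 ≤ rank v := h
    calc rank u * n + (idx u).val < (rank u + 1) * n := by nlinarith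
    _ ≤ rank v * n := Nat.mul_le_mul_right n h2
    _ ≤ rank v * n + (idx v).val := Nat.le_add_right _ _
  have hw_inj : Function.Injective weight := by
    intro u v h
    have h1 : (idx u).val < n := (idx u).isLt
    have h2 : (idx v).val < n := (idx v).isLt
    have hr : rank u = rank v := by
      rcases lt_trichotomy (rank u) (rank v) with hl | hl | hl
      · exact absurd h (Nat.ne_of_lt (hwlt u v hl))
      · exact hl
      · exact absurd h.symm (Nat.ne_of_lt (hwlt v u hl))
    have h3 : rank u * n + (idx u).val = rank v * n + (idx v).val := h
    rw [hr] at h3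
    have h4 : (idx u).val = (idx v).val := by omega
    exact idx.injective (Fin.ext h4)
  set w0 : Fin n → ℕ := fun k => weight (idx.symm k) with hw0
  set σ : Equiv.Perm (Fin n) := Tuple.sort w0 with hσ
  have hmono : Monotone (w0 ∘ σ) := Tuple.monotone_sort w0
  have hinj0 : Function.Injective (w0 ∘ σ) :=
    (hw_inj.comp idx.symm.injective).comp σ.injective
  have hsm : StrictMono (w0 ∘ σ) := hmono.strictMono_of_injective hinj0
  set e : Fin n ≃ V := σ.trans idx.symm with he
  have he_lt : ∀ i j : Fin n, i < j ↔ weight (e i) < weight (e j) := by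
    intro i j
    exact (hsm.lt_iff_lt).symm
  have hwr : ∀ v, v ≠ r → weight r < weight v := by
    intro v hv
    apply hwlt
    rw [hrank_r]
    exact Nat.pos_of_ne_zero (fun h => hv (hrank_zero v h))
  have he0 : e 0 = r := by
    by_contra hne
    have h1 : e.symm r ≠ 0 := fun h => hne (by rw [← h, e.apply_symm_apply])
    have h2 : (0 : Fin n) < e.symm r := by
      rcases (Fin.pos_iff_ne_zero' (e.symm r)).mpr h1 with h
      exact h
    have h3 : weight (e 0) < weight (e (e.symm r)) := (he_lt 0 _).mp h2
    rw [e.apply_symm_apply] at h3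
    have h4 := hwr (e 0) hne
    omega
  have he_ne_r : ∀ i : Fin n, i ≠ 0 → e i ≠ r := by
    intro i hi h
    exact hi (e.injective (h.trans he0.symm))
  set f : Fin n → Fin n := fun i => if i = 0 then 0 else e.symm (parent (e i)) with hf
  have hf0 : f 0 = 0 := by simp [hf]
  have hfi : ∀ i : Fin n, i ≠ 0 → f i = e.symm (parent (e i)) := by
    intro i hi
    simp [hf, hi]
  have hlt : ∀ i : Fin n, i ≠ 0 → f i < i := by
    intro i hi
    rw [hfi i hi]
    have hv := he_ne_r i hi
    have h4 : rank (parent (e i)) < rank (e i) := by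
      have := hparent_rank _ hv
      omega
    have h5 : weight (parent (e i)) < weight (e i) := hwlt _ _ h4
    apply (he_lt _ i).mpr
    rw [e.apply_symm_apply]
    exact h5
  refine ⟨e, f, hf0, hlt, ?_⟩
  intro i j
  constructor
  · intro hadj
    rcases hadj_char (e i) (e j) hadj with ⟨hne, hp⟩ | ⟨hne, hp⟩
    · have hi : i ≠ 0 := fun h => hne (by rw [h, he0])
      left
      refine ⟨hi, ?_⟩
      rw [hfi i hi, hp, e.symm_apply_apply]
    · have hj : j ≠ 0 := fun h => hne (by rw [h, he0])
      right
      refine ⟨hj, ?_⟩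
      rw [hfi j hj, hp, e.symm_apply_apply]
  · intro hA
    rcases hA with ⟨hi, hfij⟩ | ⟨hj, hfij⟩
    · rw [hfi i hi] at hfij
      have : parent (e i) = e j := by
        rw [← hfij, e.apply_symm_apply]
      rw [← this]
      exact hparent_adj (e i) (he_ne_r i hi)
    · rw [hfi j hj] at hfij
      have : parent (e j) = e i := by
        rw [← hfij, e.apply_symm_apply]
      rw [← this]
      exact (hparent_adj (e j) (he_ne_r j hj)).symm



/-- A crumby coloring: `red v = true` means `v` is red. Blue components are
isolated vertices or single edges (blue induced max degree ≤ 1); the red induced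
subgraph has min degree ≥ 1 and contains no path with 3 edges, i.e. every red
component is a star with 1, 2 or 3 edges. -/
def Crumby {V : Type*} (G : SimpleGraph V) (red : V → Bool) : Prop :=
  (∀ v, red v = false → {w | G.Adj v w ∧ red w = false}.Subsingleton) ∧
  (∀ v, red v = true → ∃ w, G.Adj v w ∧ red w = true) ∧
  ¬ ∃ a b c d : V, red a = true ∧ red b = true ∧ red c = true ∧ red d = true ∧
      a ≠ b ∧ a ≠ c ∧ a ≠ d ∧ b ≠ c ∧ b ≠ d ∧ c ≠ d ∧
      G.Adj a b ∧ G.Adj b c ∧ G.Adj c d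

/-- Every subcubic tree has a crumby coloring. -/
theorem subcubic_tree_crumby {V : Type*} [Fintype V] (G : SimpleGraph V)
    (hconn : G.Connected) (hacyc : G.IsAcyclic)
    (hdeg : ∀ v, (G.neighborSet v).ncard ≤ 3) :
    ∃ red : V → Bool, Crumby G red := by
  classical
  haveI : Nonempty V := hconn.nonempty
  haveI : NeZero (Fintype.card V) := ⟨Fintype.card_ne_zero⟩
  obtain ⟨e, f, hf0, hlt, hAiff⟩ := tree_struct G hconn hacyc
  have hdegf : ∀ i : Fin (Fintype.card V), i ≠ 0 →
      (Finset.univ.filter (fun j => CrumbyProof.Child f j i)).card ≤ 2 := by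
    intro i hi
    have hparent_mem : e (f i) ∈ G.neighborSet (e i) :=
      (hAiff i (f i)).mpr (Or.inl ⟨hi, rfl⟩)
    have hsub : (fun c => e c) '' {c | CrumbyProof.Child f c i} ⊆
        G.neighborSet (e i) \ {e (f i)} := by
      rintro - ⟨c, hc, rfl⟩
      refine ⟨(hAiff i c).mpr (Or.inr ⟨hc.1, hc.2⟩), ?_⟩
      simp only [Set.mem_singleton_iff]
      intro h
      have hci : c = f i := e.injective h
      have h1 : i < c := CrumbyProof.child_gt hlt hc
      have h2 : f i < i := hlt i hi
      rw [hci] at h1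
      exact absurd h1 (not_lt.mpr h2.le)
    have hcard1 : (G.neighborSet (e i) \ {e (f i)}).ncard ≤ 2 := by
      have h3 := hdeg (e i)
      have h4 := Set.ncard_diff_singleton_of_mem hparent_mem
      omega
    have hcard2 : {c | CrumbyProof.Child f c i}.ncard ≤ 2 := by
      rw [← Set.ncard_image_of_injective {c | CrumbyProof.Child f c i} e.injective]
      exact le_trans (Set.ncard_le_ncard hsub (Set.toFinite _)) hcard1
    have : (Finset.univ.filter (fun j => CrumbyProof.Child f j i)).card =
        {c | CrumbyProof.Child f c i}.ncard := by
      rw [Set.ncard_eq_toFinset_card']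
      congr 1
      ext x
      simp
    omega
  obtain ⟨red, hc1, hc2, hc3⟩ := CrumbyProof.phase2 hf0 hlt hdegf
  have hAdj : ∀ v w : V, G.Adj v w ↔ CrumbyProof.A f (e.symm v) (e.symm w) := by
    intro v w
    rw [← hAiff (e.symm v) (e.symm w), e.apply_symm_apply, e.apply_symm_apply]
  refine ⟨fun v => red (e.symm v), ?_, ?_, ?_⟩
  · intro v hv w hw w' hw'
    obtain ⟨haw, hrw⟩ := hw
    obtain ⟨haw', hrw'⟩ := hw'
    have h := hc1 (e.symm v) hv (e.symm w) (e.symm w')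
      ((hAdj v w).mp haw) ((hAdj v w').mp haw') hrw hrw'
    exact e.symm.injective h
  · intro v hv
    obtain ⟨w0, hA, hr⟩ := hc2 (e.symm v) hv
    refine ⟨e w0, ?_, ?_⟩
    · rw [hAdj v (e w0), e.symm_apply_apply]
      exact hA
    · show red (e.symm (e w0)) = true
      rw [e.symm_apply_apply]
      exact hr
  · rintro ⟨a, b, c, d, ha, hb, hcr, hd, hab, hac, had, hbc, hbd, hcd, h1, h2, h3⟩
    exact hc3 (e.symm a) (e.symm b) (e.symm c) (e.symm d) ha hb hcr hd
      (fun h => hab (e.symm.injective h)) (fun h => hac (e.symm.injective h))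
      (fun h => had (e.symm.injective h)) (fun h => hbc (e.symm.injective h))
      (fun h => hbd (e.symm.injective h)) (fun h => hcd (e.symm.injective h))
      ((hAdj a b).mp h1) ((hAdj b c).mp h2) ((hAdj c d).mp h3)
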